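/- For every n ≥ 1, the subgroup of the symmetric group on F_3^n generated by all coordinate-wise applications of the gates S_{1,2}, X, and SUM equals exactly the group of affine permutations of F_3^n, i.e., a permutation π of F_3^n lies in this subgroup if and only if there exist A ∈ GL(n, F_3) and v ∈ F_3^n such that π(x) = A·x + v for all x ∈ F_3^n. -/

import Mathlib

def s12Fun (n : ℕ) (i : Fin n) (x : Fin n → ZMod 3) : Fin n → ZMod 3 :=
  Function.update x i (2 * x i)

lemma s12Fun_invol (n : ℕ) (i : Fin n) (x : Fin n → ZMod 3) :
    s12Fun n i (s12Fun n i x) = x := by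
  funext j
  rcases eq_or_ne j i with rfl | h
  · simp only [s12Fun, Function.update_self]
    rw [← mul_assoc, show (2 : ZMod 3) * 2 = 1 by decide, one_mul]
  · simp [s12Fun, Function.update_of_ne h]

/-- The gate `S_{1,2}` acting on coordinate `i`: `x ↦ 2x` on that coordinate
(and the identity elsewhere), as a permutation of `F₃ⁿ`. -/
def s12Gate (n : ℕ) (i : Fin n) : Equiv.Perm (Fin n → ZMod 3) :=
  ⟨s12Fun n i, s12Fun n i, s12Fun_invol n i, s12Fun_invol n i⟩

def xFun (n : ℕ) (i : Fin n) (c : ZMod 3) (x : Fin n → ZMod 3) : Fin n → ZMod 3 :=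
  Function.update x i (x i + c)

lemma xFun_inv (n : ℕ) (i : Fin n) (c : ZMod 3) (x : Fin n → ZMod 3) :
    xFun n i (-c) (xFun n i c x) = x := by
  funext j
  rcases eq_or_ne j i with rfl | h
  · simp [xFun, Function.update_self]
  · simp [xFun, Function.update_of_ne h]

/-- The gate `X` acting on coordinate `i`: `x ↦ x + 1` on that coordinate
(and the identity elsewhere), as a permutation of `F₃ⁿ`. -/
def xGate (n : ℕ) (i : Fin n) : Equiv.Perm (Fin n → ZMod 3) :=
  ⟨xFun n i 1, xFun n i (-1), fun x => by simpa using xFun_inv n i 1 x, fun x => by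
    have := xFun_inv n i (-1) x
    simpa using this⟩

def sumFun (n : ℕ) (i j : Fin n) (s : ZMod 3) (x : Fin n → ZMod 3) : Fin n → ZMod 3 :=
  Function.update x j (x j + s * x i)

lemma sumFun_inv (n : ℕ) (i j : Fin n) (h : i ≠ j) (s : ZMod 3) (x : Fin n → ZMod 3) :
    sumFun n i j (-s) (sumFun n i j s x) = x := by
  funext m
  rcases eq_or_ne m j with rfl | hm
  · simp [sumFun, Function.update_self, Function.update_of_ne h]
  · simp [sumFun, Function.update_of_ne hm]

/-- The gate `SUM` with control coordinate `i` and target coordinate `j ≠ i`: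
`(x_i, x_j) ↦ (x_i, x_i + x_j)` (and the identity elsewhere), as a
permutation of `F₃ⁿ`. -/
def sumGate (n : ℕ) (i j : Fin n) (h : i ≠ j) : Equiv.Perm (Fin n → ZMod 3) :=
  ⟨sumFun n i j 1, sumFun n i j (-1), fun x => by simpa using sumFun_inv n i j h 1 x, fun x => by
    have := sumFun_inv n i j h (-1) x
    simpa using this⟩

/-- The set of all classical ternary gates `S_{1,2}`, `X`, `SUM` acting on the
coordinates of `F₃ⁿ`. -/
def gateSet (n : ℕ) : Set (Equiv.Perm (Fin n → ZMod 3)) :=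
  {e | (∃ i, e = s12Gate n i) ∨ (∃ i, e = xGate n i) ∨
    ∃ i j, ∃ h : i ≠ j, e = sumGate n i j h}


section Aux

open Matrix

lemma s12Gate_pow (n : ℕ) (i : Fin n) (k : ℕ) (x : Fin n → ZMod 3) :
    ((s12Gate n i) ^ k) x = Function.update x i (2 ^ k * x i) := by
  induction k generalizing x with
  | zero => simp
  | succ k ih =>
    rw [pow_succ]
    calc ((s12Gate n i ^ k) * s12Gate n i) x = (s12Gate n i ^ k) (s12Gate n i x) := rfl
    _ = _ := by
      rw [ih (s12Gate n i x)]
      simp only [show ∀ y, (s12Gate n i) y = s12Fun n i y from fun _ => rfl,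
        s12Fun, Function.update_self, Function.update_idem]
      ring_nf

lemma xGate_pow (n : ℕ) (i : Fin n) (k : ℕ) (x : Fin n → ZMod 3) :
    ((xGate n i) ^ k) x = Function.update x i (x i + k) := by
  induction k generalizing x with
  | zero => simp
  | succ k ih =>
    rw [pow_succ]
    calc ((xGate n i ^ k) * xGate n i) x = (xGate n i ^ k) (xGate n i x) := rfl
    _ = _ := by
      rw [ih (xGate n i x)]
      simp only [show ∀ y, (xGate n i) y = xFun n i 1 y from fun _ => rfl,
        xFun, Function.update_self, Function.update_idem]
      congr 1
      push_cast
      ring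

lemma sumGate_pow (n : ℕ) (i j : Fin n) (h : i ≠ j) (k : ℕ) (x : Fin n → ZMod 3) :
    ((sumGate n i j h) ^ k) x = Function.update x j (x j + k * x i) := by
  induction k generalizing x with
  | zero => simp
  | succ k ih =>
    rw [pow_succ]
    calc ((sumGate n i j h ^ k) * sumGate n i j h) x
        = (sumGate n i j h ^ k) (sumGate n i j h x) := rfl
    _ = _ := by
      rw [ih (sumGate n i j h x)]
      simp only [show ∀ y, (sumGate n i j h) y = sumFun n i j 1 y from fun _ => rfl,
        sumFun, Function.update_self, Function.update_idem, Function.update_of_ne h]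
      congr 1
      push_cast
      ring

lemma s12Gate_mem (n : ℕ) (i : Fin n) : s12Gate n i ∈ Subgroup.closure (gateSet n) :=
  Subgroup.subset_closure (Or.inl ⟨i, rfl⟩)

lemma xGate_mem (n : ℕ) (i : Fin n) : xGate n i ∈ Subgroup.closure (gateSet n) :=
  Subgroup.subset_closure (Or.inr (Or.inl ⟨i, rfl⟩))

lemma sumGate_mem (n : ℕ) (i j : Fin n) (h : i ≠ j) :
    sumGate n i j h ∈ Subgroup.closure (gateSet n) :=
  Subgroup.subset_closure (Or.inr (Or.inr ⟨i, j, h, rfl⟩))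

/-- Translations are in the closure. -/
lemma translation_mem (n : ℕ) (v : Fin n → ZMod 3) :
    ∃ e ∈ Subgroup.closure (gateSet n), ∀ x, e x = x + v := by
  have key : ∀ s : Finset (Fin n), ∃ e ∈ Subgroup.closure (gateSet n),
      ∀ x j, e x j = x j + (if j ∈ s then v j else 0) := by
    intro s
    induction s using Finset.induction with
    | empty => exact ⟨1, one_mem _, by simp⟩
    | @insert a s ha ih =>
      obtain ⟨e, he, hee⟩ := ih
      refine ⟨(xGate n a) ^ ((v a).val) * e,
        mul_mem (pow_mem (xGate_mem n a) _) he, ?_⟩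
      intro x j
      have hcast : (((v a).val : ℕ) : ZMod 3) = v a := by
        simp [ZMod.natCast_val, ZMod.cast_id]
      have happ : ((xGate n a) ^ ((v a).val) * e) x
          = Function.update (e x) a ((e x) a + v a) := by
        show ((xGate n a) ^ ((v a).val)) (e x) = _
        rw [xGate_pow, hcast]
      rw [happ]
      rcases eq_or_ne j a with rfl | hj
      · simp [Function.update_self, hee x j, ha]
      · simp [Function.update_of_ne hj, hee x j, Finset.mem_insert, hj]
  obtain ⟨e, he, hee⟩ := key Finset.univ
  exact ⟨e, he, fun x => by funext j; simp [hee x j]⟩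

/-- Invertible diagonal linear maps are in the closure. -/
lemma diagonal_mem (n : ℕ) (D : Fin n → ZMod 3) (hD : ∀ j, D j ≠ 0) :
    ∃ e ∈ Subgroup.closure (gateSet n), ∀ x, e x = fun j => D j * x j := by
  have pow2 : ∀ b : ZMod 3, b ≠ 0 → (2 : ZMod 3) ^ (if b = 1 then 0 else 1) = b := by decide
  have key : ∀ s : Finset (Fin n), ∃ e ∈ Subgroup.closure (gateSet n),
      ∀ x j, e x j = (if j ∈ s then D j else 1) * x j := by
    intro s
    induction s using Finset.induction with
    | empty => exact ⟨1, one_mem _, by simp⟩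
    | @insert a s ha ih =>
      obtain ⟨e, he, hee⟩ := ih
      refine ⟨(s12Gate n a) ^ (if D a = 1 then 0 else 1) * e,
        mul_mem (pow_mem (s12Gate_mem n a) _) he, ?_⟩
      intro x j
      have happ : ((s12Gate n a) ^ (if D a = 1 then 0 else 1) * e) x
          = Function.update (e x) a (D a * (e x) a) := by
        show ((s12Gate n a) ^ (if D a = 1 then 0 else 1)) (e x) = _
        rw [s12Gate_pow, pow2 _ (hD a)]
      rw [happ]
      rcases eq_or_ne j a with rfl | hj
      · simp [Function.update_self, hee x j, ha]
      · simp [Function.update_of_ne hj, hee x j, Finset.mem_insert, hj]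
  obtain ⟨e, he, hee⟩ := key Finset.univ
  exact ⟨e, he, fun x => by funext j; simp [hee x j]⟩

/-- Transvections are in the closure. -/
lemma transvection_mem (n : ℕ) (i j : Fin n) (h : i ≠ j) (c : ZMod 3) :
    ∃ e ∈ Subgroup.closure (gateSet n),
      ∀ x, e x = (Matrix.transvection i j c).mulVec x := by
  refine ⟨(sumGate n j i h.symm) ^ c.val, pow_mem (sumGate_mem n j i h.symm) _, fun x => ?_⟩
  have hcast : ((c.val : ℕ) : ZMod 3) = c := by simp [ZMod.natCast_val, ZMod.cast_id]
  rw [sumGate_pow, hcast]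
  rw [Matrix.transvection, Matrix.add_mulVec, Matrix.one_mulVec,
    Matrix.single_mulVec]
  funext k
  rcases eq_or_ne k i with rfl | hk
  · simp [Function.update_self]
  · simp [Function.update_of_ne hk, Function.update_of_ne hk]

/-- Every invertible linear map is in the closure. -/
lemma linear_mem (n : ℕ) (M : Matrix (Fin n) (Fin n) (ZMod 3)) (hM : M.det ≠ 0) :
    ∃ e ∈ Subgroup.closure (gateSet n), ∀ x, e x = M.mulVec x := by
  apply Matrix.diagonal_transvection_induction_of_det_ne_zero
    (fun N => ∃ e ∈ Subgroup.closure (gateSet n), ∀ x, e x = N.mulVec x) M hM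
  · intro D hDdet
    have hD : ∀ j, D j ≠ 0 := by
      intro j hj
      apply hDdet
      rw [Matrix.det_diagonal]
      exact Finset.prod_eq_zero (Finset.mem_univ j) hj
    obtain ⟨e, he, hee⟩ := diagonal_mem n D hD
    refine ⟨e, he, fun x => ?_⟩
    rw [hee]
    funext k
    rw [Matrix.mulVec_diagonal]
  · intro t
    obtain ⟨e, he, hee⟩ := transvection_mem n t.i t.j t.hij t.c
    exact ⟨e, he, hee⟩
  · rintro A B _ _ ⟨e, he, hee⟩ ⟨f, hf, hff⟩
    refine ⟨e * f, mul_mem he hf, fun x => ?_⟩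
    show e (f x) = _
    rw [hff, hee, Matrix.mulVec_mulVec]

/-- The affine subgroup. -/
def affineSubgroup (n : ℕ) : Subgroup (Equiv.Perm (Fin n → ZMod 3)) where
  carrier := {π | ∃ (A : GL (Fin n) (ZMod 3)) (v : Fin n → ZMod 3),
    ∀ x, π x = (A : Matrix (Fin n) (Fin n) (ZMod 3)).mulVec x + v}
  one_mem' := ⟨1, 0, fun x => by simp [Matrix.one_mulVec]⟩
  mul_mem' := by
    rintro π σ ⟨A, v, hA⟩ ⟨B, w, hB⟩
    refine ⟨A * B, (A : Matrix (Fin n) (Fin n) (ZMod 3)).mulVec w + v, fun x => ?_⟩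
    show π (σ x) = _
    rw [hB, hA, Units.val_mul, Matrix.mulVec_add, ← Matrix.mulVec_mulVec]
    abel
  inv_mem' := by
    rintro π ⟨A, v, hA⟩
    refine ⟨A⁻¹, -((A⁻¹ : GL (Fin n) (ZMod 3)) : Matrix (Fin n) (Fin n) (ZMod 3)).mulVec v,
      fun y => ?_⟩
    apply π.injective
    rw [show π (π⁻¹ y) = y from π.apply_symm_apply y, hA]
    have h1 : ((A : Matrix (Fin n) (Fin n) (ZMod 3)) *
        ((A⁻¹ : GL (Fin n) (ZMod 3)) : Matrix (Fin n) (Fin n) (ZMod 3))) = 1 := by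
      rw [← Units.val_mul, mul_inv_cancel, Units.val_one]
    rw [Matrix.mulVec_add, Matrix.mulVec_mulVec, h1, Matrix.one_mulVec,
      Matrix.mulVec_neg, Matrix.mulVec_mulVec, h1, Matrix.one_mulVec]
    abel

lemma gateSet_subset_affine (n : ℕ) : gateSet n ⊆ (affineSubgroup n : Set _) := by
  rintro e (⟨i, rfl⟩ | ⟨i, rfl⟩ | ⟨i, j, h, rfl⟩)
  · -- s12Gate
    set d : Fin n → ZMod 3 := fun j => if j = i then 2 else 1 with hd
    have hdet : (Matrix.diagonal d).det ≠ 0 := by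
      rw [Matrix.det_diagonal]
      rw [Finset.prod_ne_zero_iff]
      intro j _
      by_cases hji : j = i <;> simp [hd, hji] <;> decide
    refine ⟨Matrix.GeneralLinearGroup.mkOfDetNeZero _ hdet, 0, fun x => ?_⟩
    show s12Fun n i x = _
    funext k
    have : ((Matrix.GeneralLinearGroup.mkOfDetNeZero (Matrix.diagonal d) hdet :
        GL (Fin n) (ZMod 3)) : Matrix (Fin n) (Fin n) (ZMod 3)) = Matrix.diagonal d := rfl
    rw [this]
    simp only [Pi.add_apply, Pi.zero_apply, add_zero, Matrix.mulVec_diagonal]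
    rcases eq_or_ne k i with rfl | hk
    · simp [s12Fun, hd, Function.update_self]
    · simp [s12Fun, hd, Function.update_of_ne hk, hk]
  · -- xGate
    refine ⟨1, Pi.single i 1, fun x => ?_⟩
    show xFun n i 1 x = _
    funext k
    rw [Units.val_one, Matrix.one_mulVec]
    rcases eq_or_ne k i with rfl | hk
    · simp [xFun, Function.update_self, Pi.single_eq_same]
    · simp [xFun, Function.update_of_ne hk, Pi.single_eq_of_ne hk]
  · -- sumGate
    have hdet : (Matrix.transvection j i (1 : ZMod 3)).det ≠ 0 := by
      rw [Matrix.det_transvection_of_ne _ _ h.symm]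
      exact one_ne_zero
    refine ⟨Matrix.GeneralLinearGroup.mkOfDetNeZero _ hdet, 0, fun x => ?_⟩
    show sumFun n i j 1 x = _
    have hco : ((Matrix.GeneralLinearGroup.mkOfDetNeZero (Matrix.transvection j i (1 : ZMod 3))
        hdet : GL (Fin n) (ZMod 3)) : Matrix (Fin n) (Fin n) (ZMod 3))
        = Matrix.transvection j i 1 := rfl
    rw [hco, Matrix.transvection, Matrix.add_mulVec, Matrix.one_mulVec,
      Matrix.single_mulVec]
    funext k
    rcases eq_or_ne k j with rfl | hk
    · simp [sumFun, Function.update_self]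
    · simp [sumFun, Function.update_of_ne hk]

end Aux

/-- For every `n ≥ 1`, the subgroup of the symmetric group on `F₃ⁿ` generated by
all coordinate-wise applications of the gates `S_{1,2}`, `X` and `SUM` is exactly
the group of affine permutations: a permutation `π` lies in it iff there are
`A ∈ GL(n, F₃)` and `v ∈ F₃ⁿ` with `π x = A ⬝ x + v` for all `x`. -/
theorem closure_gateSet_eq_affine (n : ℕ) (hn : 1 ≤ n) (π : Equiv.Perm (Fin n → ZMod 3)) :
    π ∈ Subgroup.closure (gateSet n) ↔
      ∃ (A : GL (Fin n) (ZMod 3)) (v : Fin n → ZMod 3),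
        ∀ x, π x = (A : Matrix (Fin n) (Fin n) (ZMod 3)).mulVec x + v := by
  constructor
  · intro hπ
    exact (Subgroup.closure_le (affineSubgroup n)).mpr (gateSet_subset_affine n) hπ
  · rintro ⟨A, v, hAv⟩
    have hdet : (A : Matrix (Fin n) (Fin n) (ZMod 3)).det ≠ 0 := by
      have : IsUnit (A : Matrix (Fin n) (Fin n) (ZMod 3)).det :=
        (Matrix.isUnit_iff_isUnit_det _).mp A.isUnit
      exact this.ne_zero
    obtain ⟨e, he, hee⟩ := linear_mem n _ hdet
    obtain ⟨t, ht, htt⟩ := translation_mem n v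
    have : π = t * e := by
      apply Equiv.ext
      intro x
      show π x = t (e x)
      rw [hee, htt, hAv]
    rw [this]
    exact mul_mem ht he
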